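/- Let n and k be integers with ⌊5k/2⌋ ≤ n ≤ 3k−2 (so in particular k ≥ 4 and n > 2k). Then the metric dimension of the Kneser graph K(n,k) satisfies β(K(n,k)) ≤ 2 · C(n−k, k), where C(n−k,k) denotes the binomial coefficient. -/

import Mathlib

/-- The Johnson graph `J(n,k)`: vertices are the `k`-element subsets of `{1,...,n}`,
two vertices adjacent iff their intersection has `k-1` elements. -/
def johnsonGraph (n k : ℕ) : SimpleGraph {s : Finset (Fin n) // s.card = k} where
  Adj U W := U ≠ W ∧ (U.1 ∩ W.1).card = k - 1
  symm := by
    constructor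
    intro U W h
    exact ⟨h.1.symm, by rw [Finset.inter_comm]; exact h.2⟩
  loopless := by
    constructor
    intro U h
    exact h.1 rfl

/-- The Kneser graph `K(n,k)`: vertices are the `k`-element subsets of `{1,...,n}`,
two vertices adjacent iff the corresponding subsets are disjoint. -/
def kneserGraph (n k : ℕ) : SimpleGraph {s : Finset (Fin n) // s.card = k} where
  Adj U W := U ≠ W ∧ Disjoint U.1 W.1
  symm := by
    constructor
    intro U W h
    exact ⟨h.1.symm, h.2.symm⟩
  loopless := by
    constructor
    intro U h
    exact h.1 rfl

/-- A set `S` of vertices is a resolving set for `G` if every pair of distinct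
vertices is resolved by some vertex of `S`, i.e. is at different distances from it. -/
def resolvingSet {V : Type*} (G : SimpleGraph V) (S : Set V) : Prop :=
  ∀ u v : V, u ≠ v → ∃ x ∈ S, G.dist u x ≠ G.dist v x

/-- The metric dimension `β(G)`: the minimum cardinality of a resolving set for `G`. -/
noncomputable def metricDim {V : Type*} (G : SimpleGraph V) : ℕ :=
  sInf {m | ∃ S : Finset V, resolvingSet G ↑S ∧ S.card = m}

section WalkAux

open SimpleGraph

variable {V : Type*} {G : SimpleGraph V} {u v : V}

lemma exists_mid_of_walk_length_two (p : G.Walk u v) (h : p.length = 2) :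
    ∃ w, G.Adj u w ∧ G.Adj w v := by
  cases p with
  | nil => simp at h
  | cons h1 q =>
    cases q with
    | nil => simp at h
    | cons h2 q' =>
      have h0 : q'.length = 0 := by
        simp only [SimpleGraph.Walk.length_cons] at h; omega
      exact ⟨_, h1, (SimpleGraph.Walk.eq_of_length_eq_zero h0) ▸ h2⟩

lemma kdist_ne_two (h : ∀ w, ¬(G.Adj u w ∧ G.Adj w v)) : G.dist u v ≠ 2 := by
  intro hd
  obtain ⟨p, hp⟩ := SimpleGraph.exists_walk_of_dist_ne_zero (by rw [hd]; omega)
  obtain ⟨w, hw1, hw2⟩ := exists_mid_of_walk_length_two p (by rw [hp, hd])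
  exact h w ⟨hw1, hw2⟩

lemma kdist_eq_two (hne : u ≠ v) (hnadj : ¬G.Adj u v) {w : V}
    (h1 : G.Adj u w) (h2 : G.Adj w v) : G.dist u v = 2 := by
  have hle := SimpleGraph.dist_le (SimpleGraph.Walk.cons h1 h2.toWalk)
  simp [SimpleGraph.Walk.length_cons] at hle
  have h0 : G.dist u v ≠ 0 :=
    SimpleGraph.dist_ne_zero_iff_ne_and_reachable.mpr
      ⟨hne, ⟨SimpleGraph.Walk.cons h1 h2.toWalk⟩⟩
  have h1' : G.dist u v ≠ 1 := fun hc => hnadj (SimpleGraph.dist_eq_one_iff_adj.mp hc)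
  omega

end WalkAux

abbrev KVert (n k : ℕ) := {s : Finset (Fin n) // s.card = k}

section KneserAux

open Finset

variable {n k : ℕ}




lemma ksubset_compl_iff {s A : Finset (Fin n)} : s ⊆ Aᶜ ↔ Disjoint s A := by
  simp [Finset.subset_iff, Finset.disjoint_left, Finset.mem_compl]

lemma kexists_vert_disjoint {T : Finset (Fin n)} (h : T.card + k ≤ n) :
    ∃ x : Finset (Fin n), x.card = k ∧ Disjoint x T := by
  have hc : k ≤ Tᶜ.card := by
    rw [Finset.card_compl, Fintype.card_fin]; omega
  obtain ⟨x, hsub, hcard⟩ := Finset.exists_subset_card_eq hc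
  exact ⟨x, hcard, ksubset_compl_iff.mp hsub⟩

lemma kne_of_disjoint {s t : Finset (Fin n)} (hk : 1 ≤ k) (hs : s.card = k)
    (hd : Disjoint s t) : s ≠ t := by
  intro h
  obtain ⟨a, ha⟩ := Finset.card_pos.mp (by omega : 0 < s.card)
  exact (Finset.disjoint_left.mp hd ha) (h ▸ ha)

lemma kcommon_nbr (hk : 1 ≤ k) (u v : KVert n k)
    (h : 3 * k ≤ n + (u.1 ∩ v.1).card) :
    ∃ w, (kneserGraph n k).Adj u w ∧ (kneserGraph n k).Adj w v := by
  have hcu := Finset.card_union_add_card_inter u.1 v.1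
  rw [u.2, v.2] at hcu
  obtain ⟨x, hxc, hxd⟩ := kexists_vert_disjoint (n := n) (k := k) (T := u.1 ∪ v.1)
    (by omega)
  have hdu : Disjoint u.1 x := (hxd.mono_right Finset.subset_union_left).symm
  have hdv : Disjoint x v.1 := hxd.mono_right Finset.subset_union_right
  have hxu : (⟨x, hxc⟩ : KVert n k) ≠ u :=
    fun hh => (kne_of_disjoint hk hxc hdu.symm) (congrArg Subtype.val hh)
  have hxv : (⟨x, hxc⟩ : KVert n k) ≠ v :=
    fun hh => (kne_of_disjoint hk hxc hdv) (congrArg Subtype.val hh)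
  exact ⟨⟨x, hxc⟩, ⟨hxu.symm, hdu⟩, ⟨hxv, hdv⟩⟩

lemma kreach (h1 : 5 * k / 2 ≤ n) (h2 : n ≤ 3 * k - 2) (hk : 3 ≤ k) (u v : KVert n k) :
    (kneserGraph n k).Reachable u v := by
  by_cases huv : u = v
  · exact huv ▸ SimpleGraph.Reachable.refl u
  have hcu := Finset.card_union_add_card_inter u.1 v.1
  rw [u.2, v.2] at hcu
  by_cases hc0 : (u.1 ∩ v.1).card = 0
  · have : Disjoint u.1 v.1 := by
      rw [Finset.disjoint_iff_inter_eq_empty, ← Finset.card_eq_zero]; exact hc0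
    exact (SimpleGraph.Adj.reachable (⟨huv, this⟩ : (kneserGraph n k).Adj u v))
  by_cases hct : 3 * k ≤ n + (u.1 ∩ v.1).card
  · obtain ⟨w, hw1, hw2⟩ := kcommon_nbr (by omega) u v hct
    exact hw1.reachable.trans hw2.reachable
  · -- 1 ≤ |u ∩ v| ≤ 3k - n - 1 : build a path of length 3
    have hsd := Finset.card_sdiff_add_card_inter u.1 v.1
    rw [u.2] at hsd
    have hP : 3 * k - n ≤ (u.1 \ v.1).card := by omega
    obtain ⟨P, hPsub, hPc⟩ := Finset.exists_subset_card_eq hP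
    have hcompl : ((u.1 ∪ v.1)ᶜ).card = n - (u.1 ∪ v.1).card := by
      rw [Finset.card_compl, Fintype.card_fin]
    obtain ⟨Q, hQsub, hQc⟩ := Finset.exists_subset_card_eq
      (show k - (3 * k - n) ≤ ((u.1 ∪ v.1)ᶜ).card by rw [hcompl]; omega)
    have hPQ : Disjoint P Q := by
      refine Finset.disjoint_left.mpr fun a haP haQ => ?_
      have := hQsub haQ
      rw [Finset.mem_compl] at this
      exact this (Finset.mem_union_left _ ((Finset.sdiff_subset) (hPsub haP)))
    have hx2c : (P ∪ Q).card = k := by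
      rw [Finset.card_union_of_disjoint hPQ, hPc, hQc]; omega
    have hx2v : Disjoint (P ∪ Q) v.1 := by
      refine Finset.disjoint_left.mpr fun a ha hav => ?_
      rcases Finset.mem_union.mp ha with h | h
      · exact (Finset.mem_sdiff.mp (hPsub h)).2 hav
      · exact (Finset.mem_compl.mp (hQsub h)) (Finset.mem_union_right _ hav)
    have hx2u : 3 * k ≤ n + (u.1 ∩ (P ∪ Q)).card := by
      have : P ⊆ u.1 ∩ (P ∪ Q) := fun a ha =>
        Finset.mem_inter.mpr ⟨(Finset.mem_sdiff.mp (hPsub ha)).1, Finset.mem_union_left _ ha⟩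
      have := Finset.card_le_card this
      omega
    obtain ⟨w, hw1, hw2⟩ := kcommon_nbr (by omega) u ⟨P ∪ Q, hx2c⟩ hx2u
    have hadj : (kneserGraph n k).Adj ⟨P ∪ Q, hx2c⟩ v := by
      refine ⟨fun hh => ?_, hx2v⟩
      exact (kne_of_disjoint (by omega) hx2c hx2v) (congrArg Subtype.val hh)
    exact (hw1.reachable.trans hw2.reachable).trans hadj.reachable

lemma kconn (h1 : 5 * k / 2 ≤ n) (h2 : n ≤ 3 * k - 2) (hk : 3 ≤ k) :
    (kneserGraph n k).Connected := by
  have hkn : k ≤ n := by omega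
  obtain ⟨A, _, hA⟩ := Finset.exists_subset_card_eq
    (show k ≤ (Finset.univ : Finset (Fin n)).card by rw [Finset.card_univ, Fintype.card_fin]; omega)
  rw [SimpleGraph.connected_iff]
  exact ⟨fun u v => kreach h1 h2 hk u v, ⟨⟨A, hA⟩⟩⟩

end KneserAux
section KneserMain

open Finset

variable {n k : ℕ}

lemma kcard_filter (A : Finset (Fin n)) (hA : A.card = k)
    [DecidablePred fun w : KVert n k => Disjoint w.1 A] :
    (Finset.univ.filter fun w : KVert n k => Disjoint w.1 A).card = (n - k).choose k := by
  have hpc : (Finset.powersetCard k Aᶜ).card = (n - k).choose k := by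
    rw [Finset.card_powersetCard, Finset.card_compl, Fintype.card_fin, hA]
  rw [← hpc]
  apply Finset.card_bij (fun (w : KVert n k) _ => w.1)
  · intro w hw
    rw [Finset.mem_powersetCard]
    exact ⟨ksubset_compl_iff.mpr (Finset.mem_filter.mp hw).2, w.2⟩
  · intro a _ b _ h
    exact Subtype.ext h
  · intro s hs
    rw [Finset.mem_powersetCard] at hs
    exact ⟨⟨s, hs.2⟩, Finset.mem_filter.mpr ⟨Finset.mem_univ _, ksubset_compl_iff.mp hs.1⟩, rfl⟩

lemma kC1 (hk : 3 ≤ k)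
    (A : Finset (Fin n)) (hA : A.card = k) (u v : KVert n k)
    (hq : (v.1 \ A).card + 2 * k ≤ n)
    (hd : ((u.1 \ A) \ (v.1 \ A)).Nonempty) :
    ∃ x : KVert n k, Disjoint x.1 A ∧
      (kneserGraph n k).dist u x ≠ (kneserGraph n k).dist v x := by
  classical
  obtain ⟨a, ha⟩ := hd
  rw [Finset.mem_sdiff, Finset.mem_sdiff] at ha
  have hau : a ∈ u.1 := ha.1.1
  have haA : a ∉ A := ha.1.2
  have hav : a ∉ v.1 := fun h => ha.2 (Finset.mem_sdiff.mpr ⟨h, haA⟩)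
  have e1 : Aᶜ \ v.1 = Aᶜ \ (v.1 \ A) := by
    ext b
    simp only [Finset.mem_sdiff, Finset.mem_compl]
    tauto
  have e2 : (Aᶜ \ (v.1 \ A)).card = Aᶜ.card - (v.1 \ A).card :=
    Finset.card_sdiff_of_subset (fun b hb => Finset.mem_compl.mpr (Finset.mem_sdiff.mp hb).2)
  have e3 : Aᶜ.card = n - k := by rw [Finset.card_compl, Fintype.card_fin, hA]
  have haW : a ∈ Aᶜ \ v.1 := Finset.mem_sdiff.mpr ⟨Finset.mem_compl.mpr haA, hav⟩
  obtain ⟨R, hRsub, hRc⟩ := Finset.exists_subset_card_eq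
    (show k - 1 ≤ ((Aᶜ \ v.1).erase a).card by
      rw [Finset.card_erase_of_mem haW, e1, e2, e3]; omega)
  have haR : a ∉ R := fun h => (Finset.notMem_erase a _) (hRsub h)
  have hxc : (insert a R).card = k := by
    rw [Finset.card_insert_of_notMem haR, hRc]; omega
  have hxsub : insert a R ⊆ Aᶜ \ v.1 := by
    intro b hb
    rcases Finset.mem_insert.mp hb with rfl | hb
    · exact haW
    · exact Finset.erase_subset _ _ (hRsub hb)
  have hxA : Disjoint (insert a R) A :=
    ksubset_compl_iff.mp (fun b hb => (Finset.mem_sdiff.mp (hxsub hb)).1)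
  have hxv : Disjoint (insert a R) v.1 :=
    Finset.disjoint_left.mpr (fun b hb => (Finset.mem_sdiff.mp (hxsub hb)).2)
  have hax : a ∈ insert a R := Finset.mem_insert_self a R
  have hxvne : insert a R ≠ v.1 := fun h => hav (h ▸ hax)
  refine ⟨⟨insert a R, hxc⟩, hxA, ?_⟩
  have hdv : (kneserGraph n k).dist v ⟨insert a R, hxc⟩ = 1 :=
    SimpleGraph.dist_eq_one_iff_adj.mpr
      ⟨fun hh => hxvne (congrArg Subtype.val hh).symm, hxv.symm⟩
  have hdu : (kneserGraph n k).dist u ⟨insert a R, hxc⟩ ≠ 1 := by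
    intro hh
    have hdisj := (SimpleGraph.dist_eq_one_iff_adj.mp hh).2
    exact (Finset.disjoint_left.mp hdisj hau) hax
  rw [hdv]
  exact hdu

lemma kC2 (h1 : 5 * k / 2 ≤ n) (h2 : n ≤ 3 * k - 2) (hk : 3 ≤ k)
    (A : Finset (Fin n)) (hA : A.card = k) (u v : KVert n k)
    (hp1 : n + 1 ≤ (u.1 \ A).card + 2 * k) (hq1 : n + 1 ≤ (v.1 \ A).card + 2 * k)
    (hpk : (u.1 \ A).card < k) (hqk : (v.1 \ A).card < k)
    (hd : ((u.1 \ A) \ (v.1 \ A)).Nonempty) :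
    ∃ x : KVert n k, Disjoint x.1 A ∧
      (kneserGraph n k).dist u x ≠ (kneserGraph n k).dist v x := by
  classical
  have hd1m := Finset.card_sdiff_add_card_inter (u.1 \ A) (v.1 \ A)
  have hd1pos : 0 < ((u.1 \ A) \ (v.1 \ A)).card := Finset.card_pos.mpr hd
  have hu'W : u.1 \ A ⊆ Aᶜ := fun b hb => Finset.mem_compl.mpr (Finset.mem_sdiff.mp hb).2
  have hv'W : v.1 \ A ⊆ Aᶜ := fun b hb => Finset.mem_compl.mpr (Finset.mem_sdiff.mp hb).2
  have hWc : (Aᶜ : Finset (Fin n)).card = n - k := by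
    rw [Finset.card_compl, Fintype.card_fin, hA]
  -- choose F2 ⊆ u' ∩ v'
  have hgle : (3 * k - n) - min ((u.1 \ A) \ (v.1 \ A)).card (3 * k - n)
      ≤ ((u.1 \ A) ∩ (v.1 \ A)).card := by omega
  obtain ⟨F2, hF2sub, hF2c⟩ := Finset.exists_subset_card_eq hgle
  -- the outside part
  have huvW : (u.1 \ A) ∪ (v.1 \ A) ⊆ Aᶜ := Finset.union_subset hu'W hv'W
  have hecard : (Aᶜ \ ((u.1 \ A) ∪ (v.1 \ A))).card
      = (n - k) - ((u.1 \ A) ∪ (v.1 \ A)).card := by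
    rw [Finset.card_sdiff_of_subset huvW, hWc]
  have huv := Finset.card_union_add_card_inter (u.1 \ A) (v.1 \ A)
  -- abbreviations as plain numbers
  obtain ⟨H, hHsub, hHc⟩ := Finset.exists_subset_card_eq
    (Nat.min_le_left (Aᶜ \ ((u.1 \ A) ∪ (v.1 \ A))).card
      (k - (((u.1 \ A) \ (v.1 \ A)).card + F2.card)))
  have hvF2 : ((v.1 \ A) \ F2).card = (v.1 \ A).card - F2.card :=
    Finset.card_sdiff_of_subset (hF2sub.trans Finset.inter_subset_right)
  have hGscap : (k - (((u.1 \ A) \ (v.1 \ A)).card + F2.card)) - H.card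
      ≤ ((v.1 \ A) \ F2).card := by omega
  obtain ⟨Gs, hGssub, hGsc⟩ := Finset.exists_subset_card_eq hGscap
  -- disjointness of the four pieces
  have hdisj1 : Disjoint ((u.1 \ A) \ (v.1 \ A)) F2 :=
    Finset.disjoint_left.mpr fun b hb hbF =>
      (Finset.mem_sdiff.mp hb).2 (Finset.inter_subset_right (hF2sub hbF))
  have hdisj2 : Disjoint (((u.1 \ A) \ (v.1 \ A)) ∪ F2) H := by
    refine Finset.disjoint_left.mpr fun b hb hbH => ?_
    have hbo := Finset.mem_sdiff.mp (hHsub hbH)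
    rcases Finset.mem_union.mp hb with h | h
    · exact hbo.2 (Finset.mem_union_left _ (Finset.sdiff_subset h))
    · exact hbo.2 (Finset.mem_union_left _ (Finset.inter_subset_left (hF2sub h)))
  have hdisj3 : Disjoint ((((u.1 \ A) \ (v.1 \ A)) ∪ F2) ∪ H) Gs := by
    refine Finset.disjoint_left.mpr fun b hb hbG => ?_
    have hbv : b ∈ (v.1 \ A) \ F2 := hGssub hbG
    rcases Finset.mem_union.mp hb with h | h
    · rcases Finset.mem_union.mp h with h' | h'
      · exact (Finset.mem_sdiff.mp h').2 (Finset.mem_sdiff.mp hbv).1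
      · exact (Finset.mem_sdiff.mp hbv).2 h'
    · exact (Finset.mem_sdiff.mp (hHsub h)).2
        (Finset.mem_union_right _ (Finset.mem_sdiff.mp hbv).1)
  have hxcard : ((((u.1 \ A) \ (v.1 \ A)) ∪ F2) ∪ H ∪ Gs).card = k := by
    rw [Finset.card_union_of_disjoint hdisj3, Finset.card_union_of_disjoint hdisj2,
      Finset.card_union_of_disjoint hdisj1, hF2c, hHc, hGsc]
    omega
  have hxW : (((u.1 \ A) \ (v.1 \ A)) ∪ F2) ∪ H ∪ Gs ⊆ Aᶜ := by
    intro b hb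
    rcases Finset.mem_union.mp hb with h | h
    · rcases Finset.mem_union.mp h with h' | h'
      · rcases Finset.mem_union.mp h' with h'' | h''
        · exact hu'W (Finset.sdiff_subset h'')
        · exact hu'W (Finset.inter_subset_left (hF2sub h''))
      · exact (Finset.mem_sdiff.mp (hHsub h')).1
    · exact hv'W (Finset.mem_sdiff.mp (hGssub h)).1
  have hxA : Disjoint ((((u.1 \ A) \ (v.1 \ A)) ∪ F2) ∪ H ∪ Gs) A :=
    ksubset_compl_iff.mp hxW
  -- lower bound on |x ∩ u|
  have hsubxu : ((u.1 \ A) \ (v.1 \ A)) ∪ F2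
      ⊆ ((((u.1 \ A) \ (v.1 \ A)) ∪ F2) ∪ H ∪ Gs) ∩ u.1 := by
    intro b hb
    refine Finset.mem_inter.mpr ⟨Finset.mem_union_left _ (Finset.mem_union_left _ hb), ?_⟩
    rcases Finset.mem_union.mp hb with h | h
    · exact (Finset.mem_sdiff.mp (Finset.sdiff_subset h)).1
    · exact (Finset.mem_sdiff.mp (Finset.inter_subset_left (hF2sub h))).1
  have hxu : 3 * k - n ≤ (((((u.1 \ A) \ (v.1 \ A)) ∪ F2) ∪ H ∪ Gs) ∩ u.1).card := by
    have hle := Finset.card_le_card hsubxu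
    rw [Finset.card_union_of_disjoint hdisj1, hF2c] at hle
    omega
  -- upper bound on |x ∩ v|
  have hsubxv : ((((u.1 \ A) \ (v.1 \ A)) ∪ F2) ∪ H ∪ Gs) ∩ v.1 ⊆ F2 ∪ Gs := by
    intro b hb
    obtain ⟨hbx, hbv⟩ := Finset.mem_inter.mp hb
    have hbnA : b ∉ A := Finset.mem_compl.mp (hxW hbx)
    have hbv' : b ∈ v.1 \ A := Finset.mem_sdiff.mpr ⟨hbv, hbnA⟩
    rcases Finset.mem_union.mp hbx with h | h
    · rcases Finset.mem_union.mp h with h' | h'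
      · rcases Finset.mem_union.mp h' with h'' | h''
        · exact absurd hbv' (Finset.mem_sdiff.mp h'').2
        · exact Finset.mem_union_left _ h''
      · exact absurd (Finset.mem_union_right _ hbv')
          (Finset.mem_sdiff.mp (hHsub h')).2
    · exact Finset.mem_union_right _ h
  have hxv : (((((u.1 \ A) \ (v.1 \ A)) ∪ F2) ∪ H ∪ Gs) ∩ v.1).card + 1 ≤ 3 * k - n := by
    have hle := Finset.card_le_card hsubxv
    have hun := Finset.card_union_le F2 Gs
    omega
  set G := kneserGraph n k with hGdef
  refine ⟨⟨_, hxcard⟩, hxA, ?_⟩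
  have hxneu : (((u.1 \ A) \ (v.1 \ A)) ∪ F2) ∪ H ∪ Gs ≠ u.1 := by
    intro h
    have hsub : u.1 ⊆ Aᶜ := h ▸ hxW
    have heq : u.1 \ A = u.1 :=
      Finset.sdiff_eq_self_iff_disjoint.mpr (ksubset_compl_iff.mp hsub)
    rw [heq, u.2] at hpk
    omega
  have hxnev : (((u.1 \ A) \ (v.1 \ A)) ∪ F2) ∪ H ∪ Gs ≠ v.1 := by
    intro h
    have hsub : v.1 ⊆ Aᶜ := h ▸ hxW
    have heq : v.1 \ A = v.1 :=
      Finset.sdiff_eq_self_iff_disjoint.mpr (ksubset_compl_iff.mp hsub)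
    rw [heq, v.2] at hqk
    omega
  have hnadj_u : ¬ G.Adj u ⟨_, hxcard⟩ := by
    intro hadj
    have h0 : u.1 ∩ ((((u.1 \ A) \ (v.1 \ A)) ∪ F2) ∪ H ∪ Gs) = ∅ :=
      Finset.disjoint_iff_inter_eq_empty.mp hadj.2
    have h0' := congrArg Finset.card h0
    rw [Finset.inter_comm] at h0'
    rw [h0'] at hxu
    simp at hxu
    omega
  have hicu : (u.1 ∩ ((((u.1 \ A) \ (v.1 \ A)) ∪ F2) ∪ H ∪ Gs)).card
      = (((((u.1 \ A) \ (v.1 \ A)) ∪ F2) ∪ H ∪ Gs) ∩ u.1).card := by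
    rw [Finset.inter_comm]
  obtain ⟨w, hw1, hw2⟩ := kcommon_nbr (by omega) u ⟨_, hxcard⟩ (by
    show 3 * k ≤ n + (u.1 ∩ ((((u.1 \ A) \ (v.1 \ A)) ∪ F2) ∪ H ∪ Gs)).card
    rw [hicu]; omega)
  have hdu2 : G.dist u ⟨_, hxcard⟩ = 2 :=
    kdist_eq_two (fun h => hxneu (congrArg Subtype.val h).symm) hnadj_u hw1 hw2
  by_cases hvx : (((((u.1 \ A) \ (v.1 \ A)) ∪ F2) ∪ H ∪ Gs) ∩ v.1).card = 0
  · have hdisj : Disjoint ((((u.1 \ A) \ (v.1 \ A)) ∪ F2) ∪ H ∪ Gs) v.1 :=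
      Finset.disjoint_iff_inter_eq_empty.mpr (Finset.card_eq_zero.mp hvx)
    have hdv : G.dist v ⟨_, hxcard⟩ = 1 :=
      SimpleGraph.dist_eq_one_iff_adj.mpr
        ⟨fun h => hxnev (congrArg Subtype.val h).symm, hdisj.symm⟩
    rw [hdu2, hdv]
    omega
  · have hnotwo : G.dist v ⟨_, hxcard⟩ ≠ 2 := by
      apply kdist_ne_two
      rintro w' ⟨hwa, hwb⟩
      have hdd : Disjoint w'.1 (v.1 ∪ ((((u.1 \ A) \ (v.1 \ A)) ∪ F2) ∪ H ∪ Gs)) :=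
        Finset.disjoint_union_right.mpr ⟨hwa.2.symm, hwb.2⟩
      have hcard : (w'.1 ∪ (v.1 ∪ ((((u.1 \ A) \ (v.1 \ A)) ∪ F2) ∪ H ∪ Gs))).card
          = k + (v.1 ∪ ((((u.1 \ A) \ (v.1 \ A)) ∪ F2) ∪ H ∪ Gs)).card := by
        rw [Finset.card_union_of_disjoint hdd, w'.2]
      have hle : (w'.1 ∪ (v.1 ∪ ((((u.1 \ A) \ (v.1 \ A)) ∪ F2) ∪ H ∪ Gs))).card ≤ n := by
        refine le_trans (Finset.card_le_univ _) ?_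
        rw [Fintype.card_fin]
      have hvx2 := Finset.card_union_add_card_inter v.1
        ((((u.1 \ A) \ (v.1 \ A)) ∪ F2) ∪ H ∪ Gs)
      rw [v.2, hxcard] at hvx2
      have hic : (v.1 ∩ ((((u.1 \ A) \ (v.1 \ A)) ∪ F2) ∪ H ∪ Gs)).card
          = (((((u.1 \ A) \ (v.1 \ A)) ∪ F2) ∪ H ∪ Gs) ∩ v.1).card := by
        rw [Finset.inter_comm]
      omega
    rw [hdu2]
    exact fun h => hnotwo h.symm

lemma kKEY2 (h1 : 5 * k / 2 ≤ n) (h2 : n ≤ 3 * k - 2) (hk : 3 ≤ k)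
    (A : Finset (Fin n)) (hA : A.card = k) (u v : KVert n k)
    (hpk : (u.1 \ A).card < k) (hqk : (v.1 \ A).card < k)
    (hd : ((u.1 \ A) \ (v.1 \ A)).Nonempty) :
    ∃ x : KVert n k, Disjoint x.1 A ∧
      (kneserGraph n k).dist u x ≠ (kneserGraph n k).dist v x := by
  by_cases hc1 : (v.1 \ A).card + 2 * k ≤ n
  · exact kC1 hk A hA u v hc1 hd
  by_cases hc2 : (u.1 \ A).card + 2 * k ≤ n
  · have hd2 : ((v.1 \ A) \ (u.1 \ A)).Nonempty := by
      rw [Finset.sdiff_nonempty]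
      intro hsub
      have := Finset.card_le_card hsub
      omega
    obtain ⟨x, hx1, hx2⟩ := kC1 hk A hA v u hc2 hd2
    exact ⟨x, hx1, hx2.symm⟩
  · exact kC2 h1 h2 hk A hA u v (by omega) (by omega) hpk hqk hd

lemma kKEY (h1 : 5 * k / 2 ≤ n) (h2 : n ≤ 3 * k - 2) (hk : 3 ≤ k)
    (A : Finset (Fin n)) (hA : A.card = k) (u v : KVert n k)
    (hne : (u.1 \ A) ≠ (v.1 \ A)) :
    ∃ x : KVert n k, Disjoint x.1 A ∧
      (kneserGraph n k).dist u x ≠ (kneserGraph n k).dist v x := by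
  classical
  by_cases hpk : (u.1 \ A).card = k
  · have heq : u.1 \ A = u.1 :=
      Finset.eq_of_subset_of_card_le Finset.sdiff_subset (by rw [u.2, hpk])
    have hdisj : Disjoint u.1 A := Finset.sdiff_eq_self_iff_disjoint.mp heq
    refine ⟨u, hdisj, ?_⟩
    have hvu : v ≠ u := fun h => hne (by rw [h])
    have hpos : 0 < (kneserGraph n k).dist v u := (kconn h1 h2 hk).pos_dist_of_ne hvu
    rw [SimpleGraph.dist_self]
    omega
  by_cases hqk : (v.1 \ A).card = k
  · have heq : v.1 \ A = v.1 :=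
      Finset.eq_of_subset_of_card_le Finset.sdiff_subset (by rw [v.2, hqk])
    have hdisj : Disjoint v.1 A := Finset.sdiff_eq_self_iff_disjoint.mp heq
    refine ⟨v, hdisj, ?_⟩
    have huv : u ≠ v := fun h => hne (by rw [h])
    have hpos : 0 < (kneserGraph n k).dist u v := (kconn h1 h2 hk).pos_dist_of_ne huv
    rw [SimpleGraph.dist_self]
    omega
  have hpk' : (u.1 \ A).card < k :=
    lt_of_le_of_ne (le_trans (Finset.card_le_card Finset.sdiff_subset) (le_of_eq u.2)) hpk
  have hqk' : (v.1 \ A).card < k :=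
    lt_of_le_of_ne (le_trans (Finset.card_le_card Finset.sdiff_subset) (le_of_eq v.2)) hqk
  by_cases hss : u.1 \ A ⊆ v.1 \ A
  · have hd : ((v.1 \ A) \ (u.1 \ A)).Nonempty := by
      rw [Finset.sdiff_nonempty]
      intro h
      exact hne (Finset.Subset.antisymm hss h)
    obtain ⟨x, hx1, hx2⟩ := kKEY2 h1 h2 hk A hA v u hqk' hpk' hd
    exact ⟨x, hx1, hx2.symm⟩
  · exact kKEY2 h1 h2 hk A hA u v hpk' hqk' (Finset.sdiff_nonempty.mpr hss)

lemma ksep {A B : Finset (Fin n)} (hAB : Disjoint A B) (u v : KVert n k) (hne : u ≠ v) :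
    u.1 \ A ≠ v.1 \ A ∨ u.1 \ B ≠ v.1 \ B := by
  by_contra hcon
  push_neg at hcon
  apply hne
  apply Subtype.ext
  ext a
  by_cases haA : a ∈ A
  · have haB : a ∉ B := fun h => (Finset.disjoint_left.mp hAB haA) h
    constructor
    · intro h
      have h' : a ∈ u.1 \ B := Finset.mem_sdiff.mpr ⟨h, haB⟩
      rw [hcon.2] at h'
      exact (Finset.mem_sdiff.mp h').1
    · intro h
      have h' : a ∈ v.1 \ B := Finset.mem_sdiff.mpr ⟨h, haB⟩
      rw [← hcon.2] at h'
      exact (Finset.mem_sdiff.mp h').1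
  · constructor
    · intro h
      have h' : a ∈ u.1 \ A := Finset.mem_sdiff.mpr ⟨h, haA⟩
      rw [hcon.1] at h'
      exact (Finset.mem_sdiff.mp h').1
    · intro h
      have h' : a ∈ v.1 \ A := Finset.mem_sdiff.mpr ⟨h, haA⟩
      rw [← hcon.1] at h'
      exact (Finset.mem_sdiff.mp h').1

end KneserMain
/-- For `⌊5k/2⌋ ≤ n ≤ 3k−2`, the metric dimension of the Kneser graph `K(n,k)`
satisfies `β(K(n,k)) ≤ 2·C(n−k,k)`. -/
theorem kneser_metricDim_le_diam3 (n k : ℕ) (h1 : 5 * k / 2 ≤ n) (h2 : n ≤ 3 * k - 2) :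
    metricDim (kneserGraph n k) ≤ 2 * Nat.choose (n - k) k := by
  classical
  by_cases hk0 : k = 0
  · subst hk0
    refine le_trans (Nat.sInf_le ⟨(∅ : Finset _), ?_, rfl⟩) (by simp)
    intro u v huv
    exact absurd (Subtype.ext (by
      rw [Finset.card_eq_zero.mp u.2, Finset.card_eq_zero.mp v.2])) huv
  have hk3 : 3 ≤ k := by omega
  obtain ⟨A, hAsub, hA⟩ := Finset.exists_subset_card_eq
    (show k ≤ (Finset.univ : Finset (Fin n)).card by
      rw [Finset.card_univ, Fintype.card_fin]; omega)
  obtain ⟨B, hBsub, hB⟩ := Finset.exists_subset_card_eq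
    (show k ≤ (Aᶜ : Finset (Fin n)).card by
      rw [Finset.card_compl, Fintype.card_fin, hA]; omega)
  have hAB : Disjoint A B := (ksubset_compl_iff.mp hBsub).symm
  have hres : resolvingSet (kneserGraph n k)
      ↑(Finset.univ.filter fun w : KVert n k => Disjoint w.1 A ∨ Disjoint w.1 B) := by
    intro u v huv
    rcases ksep hAB u v huv with h | h
    · obtain ⟨x, hx1, hx2⟩ := kKEY h1 h2 hk3 A hA u v h
      refine ⟨x, ?_, hx2⟩
      simp only [Finset.coe_filter, Finset.mem_univ, Set.mem_setOf_eq, true_and]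
      exact Or.inl hx1
    · obtain ⟨x, hx1, hx2⟩ := kKEY h1 h2 hk3 B hB u v h
      refine ⟨x, ?_, hx2⟩
      simp only [Finset.coe_filter, Finset.mem_univ, Set.mem_setOf_eq, true_and]
      exact Or.inr hx1
  have hcard : (Finset.univ.filter
      fun w : KVert n k => Disjoint w.1 A ∨ Disjoint w.1 B).card
      ≤ 2 * Nat.choose (n - k) k := by
    rw [Finset.filter_or]
    refine le_trans (Finset.card_union_le _ _) ?_
    rw [kcard_filter A hA, kcard_filter B hB]
    omega
  exact le_trans (Nat.sInf_le ⟨_, hres, rfl⟩) hcard
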